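/- If p is a prime v-palindrome, then r(p) > p and r(p) is composite. -/
import Mathlib

def r (n : ℕ) : ℕ := Nat.ofDigits 10 ((Nat.digits 10 n).reverse)

def v (n : ℕ) : ℤ :=
  ∑ p ∈ n.primeFactors,
    ((p : ℤ) + if 2 ≤ n.factorization p then (n.factorization p : ℤ) else 0)

lemma term_le (q a : ℕ) (hq : 2 ≤ q) (ha : 2 ≤ a) : q + a ≤ q ^ a := by
  induction a with
  | zero => omega
  | succ n ih =>
    rcases Nat.lt_or_ge n 2 with h | h
    · interval_cases n
      · omega
      · have h2 : 2 * q ≤ q * q := Nat.mul_le_mul_right q hq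
        have h3 : q ^ (1 + 1) = q * q := by ring
        omega
    · have h1 := ih (by omega)
      have h2 : 2 * q ^ n ≤ q * q ^ n := Nat.mul_le_mul_right _ hq
      have h3 : 1 ≤ q ^ n := Nat.one_le_pow _ _ (by omega)
      calc q + (n + 1) ≤ (q + n) + q ^ n := by omega
        _ ≤ q ^ n + q ^ n := by omega
        _ = 2 * q ^ n := by ring
        _ ≤ q * q ^ n := h2
        _ = q ^ (n + 1) := by ring

lemma sum_le_prod' (s : Finset ℕ) (f : ℕ → ℕ) (hf : ∀ x ∈ s, 2 ≤ f x) :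
    ∑ x ∈ s, f x ≤ ∏ x ∈ s, f x := by
  induction s using Finset.cons_induction with
  | empty => simp
  | cons a s ha ih =>
    rw [Finset.sum_cons, Finset.prod_cons]
    have hfa : 2 ≤ f a := hf a (Finset.mem_cons_self a s)
    have ih' := ih (fun x hx => hf x (Finset.mem_cons_of_mem hx))
    rcases s.eq_empty_or_nonempty with rfl | ⟨b, hb⟩
    · simp
    · have h2 : 2 ≤ ∏ x ∈ s, f x := by
        calc 2 ≤ f b := hf b (Finset.mem_cons_of_mem hb)
        _ ≤ ∏ x ∈ s, f x := Finset.single_le_prod'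
            (fun x hx => Nat.one_le_iff_ne_zero.mpr (by have := hf x (Finset.mem_cons_of_mem hx); omega)) hb
      have := Nat.add_le_mul hfa h2
      omega

lemma v_le (n : ℕ) : v n ≤ n := by
  rcases Nat.eq_zero_or_pos n with rfl | hn
  · simp [v]
  have h1 : v n ≤ ∑ q ∈ n.primeFactors, ((q ^ n.factorization q : ℕ) : ℤ) := by
    apply Finset.sum_le_sum
    intro q hq
    have hqp : q.Prime := Nat.prime_of_mem_primeFactors hq
    have hq2 : 2 ≤ q := hqp.two_le
    have hα : 1 ≤ n.factorization q := (Nat.Prime.factorization_pos_of_dvd hqp hn.ne' (Nat.dvd_of_mem_primeFactors hq))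
    split_ifs with h
    · have := term_le q (n.factorization q) hq2 h
      push_cast
      exact_mod_cast this
    · have : n.factorization q = 1 := by omega
      rw [this]
      simp
  have h2 : (∑ q ∈ n.primeFactors, (q ^ n.factorization q : ℕ)) ≤
      ∏ q ∈ n.primeFactors, q ^ n.factorization q := by
    apply sum_le_prod'
    intro q hq
    have hqp := Nat.prime_of_mem_primeFactors hq
    have hα : 1 ≤ n.factorization q := Nat.Prime.factorization_pos_of_dvd hqp hn.ne' (Nat.dvd_of_mem_primeFactors hq)
    calc 2 ≤ q := hqp.two_le
      _ = q ^ 1 := (pow_one q).symm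
      _ ≤ q ^ n.factorization q := Nat.pow_le_pow_right hqp.one_lt.le hα
  have h3 : ∏ q ∈ n.primeFactors, q ^ n.factorization q = n :=
    Nat.factorization_prod_pow_eq_self hn.ne'
  calc v n ≤ _ := h1
    _ ≤ ((∏ q ∈ n.primeFactors, q ^ n.factorization q : ℕ) : ℤ) := by exact_mod_cast h2
    _ = n := by rw [h3]

lemma v_prime (p : ℕ) (hp : p.Prime) : v p = p := by
  simp [v, hp.primeFactors, hp.factorization]

theorem stmt_13 (p : ℕ) (hp : p.Prime) (h10 : ¬ 10 ∣ p) (hne : p ≠ r p)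
    (hv : v p = v (r p)) :
    p < r p ∧ 1 < r p ∧ ¬ (r p).Prime := by
  have hvp : v p = p := v_prime p hp
  have hle : (p : ℤ) ≤ r p := by
    rw [← hvp, hv]; exact v_le (r p)
  have hlt : p < r p := by
    have : p ≤ r p := by exact_mod_cast hle
    omega
  refine ⟨hlt, by have := hp.two_le; omega, ?_⟩
  intro hq
  have : v (r p) = r p := v_prime _ hq
  rw [hvp, this] at hv
  have : p = r p := by exact_mod_cast hv
  omega
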